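/- Let R(z) = (1680 + 840z + 180z² + 20z³ + z⁴)/(1680 − 840z + 180z² − 20z³ + z⁴) and define g(u) = 1 − R(−u) for u ∈ [0,30]. Then g(0) = 0, g′(0) = 1 > 0, and g′(30) < 0; hence both u = 0 and u = 30 are strict local minimizers of g relative to [0,30]. In particular, the discretized problem possesses a spurious local minimizer at u = 30 in addition to the correct minimizer u = 0. -/

import Mathlib

open Set

/-- Stability function of the 4-stage Gauss–Legendre method (GL8): the (4,4) Padé
approximant of the exponential. -/
noncomputable def R_GL8 (z : ℝ) : ℝ :=
  (1680 + 840*z + 180*z^2 + 20*z^3 + z^4) / (1680 - 840*z + 180*z^2 - 20*z^3 + z^4)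

/-- GL8-discretized cost of the minimal example. -/
noncomputable def g_GL8 (u : ℝ) : ℝ := 1 - R_GL8 (-u)

lemma quartic_hasDerivAt (a b c d e x : ℝ) :
    HasDerivAt (fun u : ℝ => a + b*u + c*u^2 + d*u^3 + e*u^4)
      (b + 2*c*x + 3*d*x^2 + 4*e*x^3) x := by
  have h : HasDerivAt (fun u : ℝ => a + b*u + c*u^2 + d*u^3 + e*u^4)
      ((((0 + b*1) + c*(((2:ℕ):ℝ)*x^(2-1))) + d*(((3:ℕ):ℝ)*x^(3-1))) + e*(((4:ℕ):ℝ)*x^(4-1))) x :=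
    ((((hasDerivAt_const x a).add ((hasDerivAt_id x).const_mul b)).add
      ((hasDerivAt_pow 2 x).const_mul c)).add ((hasDerivAt_pow 3 x).const_mul d)).add
      ((hasDerivAt_pow 4 x).const_mul e)
  convert h using 1
  push_cast
  ring

lemma g_eq : g_GL8 = fun u : ℝ =>
    1 - (1680 - 840*u + 180*u^2 - 20*u^3 + u^4) / (1680 + 840*u + 180*u^2 + 20*u^3 + u^4) := by
  funext u
  unfold g_GL8 R_GL8
  ring_nf

lemma D_pos {u : ℝ} (hu : 0 ≤ u) : 0 < 1680 + 840*u + 180*u^2 + 20*u^3 + u^4 := by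
  positivity

lemma g_hasDerivAt (x : ℝ) (hx : 1680 + 840*x + 180*x^2 + 20*x^3 + x^4 ≠ 0) :
    HasDerivAt g_GL8
      (-(((-840 + 360*x - 60*x^2 + 4*x^3) * (1680 + 840*x + 180*x^2 + 20*x^3 + x^4)
        - (1680 - 840*x + 180*x^2 - 20*x^3 + x^4) * (840 + 360*x + 60*x^2 + 4*x^3))
        / (1680 + 840*x + 180*x^2 + 20*x^3 + x^4)^2)) x := by
  rw [g_eq]
  have hN := quartic_hasDerivAt 1680 (-840) 180 (-20) 1 x
  have hD := quartic_hasDerivAt 1680 840 180 20 1 x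
  have hx' : 1680 + 840*x + 180*x^2 + 20*x^3 + 1*x^4 ≠ 0 := by simpa using hx
  have h := (hN.div hD hx').const_sub 1
  convert h using 1
  · rfl
  · rfl
  · funext u; simp only [Pi.div_apply]; ring
  · ring

theorem gl8_two_local_minimizers :
    g_GL8 0 = 0 ∧
    HasDerivAt g_GL8 1 0 ∧ (1 : ℝ) > 0 ∧
    (∃ d : ℝ, HasDerivAt g_GL8 d 30 ∧ d < 0) ∧
    (∀ᶠ u in nhdsWithin 0 (Icc (0:ℝ) 30 \ {0}), g_GL8 0 < g_GL8 u) ∧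
    (∀ᶠ u in nhdsWithin 30 (Icc (0:ℝ) 30 \ {30}), g_GL8 30 < g_GL8 u) := by
  have hg0 : g_GL8 0 = 0 := by
    rw [g_eq]; norm_num
  have hpos : ∀ u : ℝ, 0 < u → 0 < g_GL8 u := by
    intro u hu
    rw [g_eq]
    have hD := D_pos hu.le
    rw [sub_pos, div_lt_one hD]
    nlinarith [pow_pos hu 3]
  refine ⟨hg0, ?_, one_pos, ?_, ?_, ?_⟩
  · have h := g_hasDerivAt 0 (by norm_num)
    convert h using 1
    norm_num
  · refine ⟨-(477401/41113744 : ℝ), ?_, by norm_num⟩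
    have h := g_hasDerivAt 30 (by norm_num)
    convert h using 2
    norm_num
  · filter_upwards [self_mem_nhdsWithin] with u hu
    rw [hg0]
    exact hpos u (lt_of_le_of_ne hu.1.1 (fun h => hu.2 h.symm))
  · have hd : HasDerivAt g_GL8 (-(477401/41113744 : ℝ)) 30 := by
      have h := g_hasDerivAt 30 (by norm_num)
      convert h using 2
      norm_num
    have hslope : ∀ᶠ u in nhdsWithin 30 {(30:ℝ)}ᶜ, slope g_GL8 30 u < 0 :=
      ((hasDerivAt_iff_tendsto_slope.mp hd).eventually_lt_const (by norm_num))
    have hmono : ∀ᶠ u in nhdsWithin 30 (Icc (0:ℝ) 30 \ {30}), slope g_GL8 30 u < 0 :=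
      hslope.filter_mono (nhdsWithin_mono 30 (fun u hu => hu.2))
    filter_upwards [hmono, self_mem_nhdsWithin] with u hs hu
    have hlt : u < 30 := lt_of_le_of_ne hu.1.2 hu.2
    rw [slope_def_field, div_neg_iff] at hs
    rcases hs with ⟨h1, h2⟩ | ⟨h1, h2⟩
    · linarith
    · linarith
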